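/- Fix a Newton diagram datum: an integer n ≥ 1 and lattice points (P₀,Q₀),…,(Pₙ,Qₙ) ∈ ℤ² with P₀ = 0, Qₙ = 0, P₀ < P₁ < … < Pₙ, Q₀ > Q₁ > … > Qₙ, p = Pₙ, q = Q₀, pᵢ = Pᵢ − Pᵢ₋₁, qᵢ = Qᵢ₋₁ − Qᵢ, q₁/p₁ > … > qₙ/pₙ, and gcd(pᵢ,qᵢ) = 1 for each i. Let Γ₋ be the closure of (ℝ≥0)² \ (conv{(P₀,Q₀),…,(Pₙ,Qₙ)} + (ℝ≥0)²). Then 2·vol(Γ₋) − (p + q) + 1 = v + r, where vol denotes 2-dimensional Lebesgue measure, v is the number of pairs (i,j) of nonnegative integers with S(i,j) = [i,i+1] × [j,j+1] ⊆ Γ₋, and r is the number of lattice points in the topological interior of Γ₋. -/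

import Mathlib

open Set MeasureTheory Pointwise

open Topology Filter

/-- The unit lattice square `S(i,j) = [i,i+1] × [j,j+1] ⊆ ℝ²`. -/
def unitSq (i j : ℤ) : Set (ℝ × ℝ) :=
  Set.Icc (i : ℝ) (i + 1) ×ˢ Set.Icc (j : ℝ) (j + 1)

/-- The region `Γ₋`: the closure of `(ℝ≥0)² \ (conv{(P₀,Q₀),…,(Pₙ,Qₙ)} + (ℝ≥0)²)`,
where `+` denotes the Minkowski sum. -/
def gammaMinus (n : ℕ) (P Q : ℕ → ℤ) : Set (ℝ × ℝ) :=
  closure ((Set.Ici (0 : ℝ) ×ˢ Set.Ici (0 : ℝ)) \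
    (convexHull ℝ {x : ℝ × ℝ | ∃ i ≤ n, x = ((P i : ℝ), (Q i : ℝ))} +
      Set.Ici (0 : ℝ) ×ˢ Set.Ici (0 : ℝ)))

namespace NewtonPf

structure ND where
  n : ℕ
  P : ℕ → ℤ
  Q : ℕ → ℤ
  hn : 1 ≤ n
  hP0 : P 0 = 0
  hQn : Q n = 0
  hPmono : ∀ i < n, P i < P (i + 1)
  hQmono : ∀ i < n, Q (i + 1) < Q i
  hconv : ∀ i, 1 ≤ i → i < n →
      ((Q (i - 1) - Q i : ℤ) : ℚ) / ((P i - P (i - 1) : ℤ) : ℚ) >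
        ((Q i - Q (i + 1) : ℤ) : ℚ) / ((P (i + 1) - P i : ℤ) : ℚ)

namespace ND

variable (d : ND)

lemma Pmono' : ∀ i j, i ≤ j → j ≤ d.n → d.P i ≤ d.P j := by
  intro i j hij hjn
  induction j with
  | zero => have : i = 0 := by omega
            subst this; rfl
  | succ k ih =>
    rcases Nat.eq_or_lt_of_le hij with h | h
    · subst h; rfl
    · have h1 : d.P k < d.P (k+1) := d.hPmono k (by omega)
      have := ih (by omega) (by omega)
      omega

lemma Pstrict : ∀ i j, i < j → j ≤ d.n → d.P i < d.P j := by
  intro i j hij hjn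
  have h1 : d.P i < d.P (i+1) := d.hPmono i (by omega)
  have h2 : d.P (i+1) ≤ d.P j := d.Pmono' (i+1) j (by omega) hjn
  omega

lemma Qmono' : ∀ i j, i ≤ j → j ≤ d.n → d.Q j ≤ d.Q i := by
  intro i j hij hjn
  induction j with
  | zero => have : i = 0 := by omega
            subst this; rfl
  | succ k ih =>
    rcases Nat.eq_or_lt_of_le hij with h | h
    · subst h; rfl
    · have h1 : d.Q (k+1) < d.Q k := d.hQmono k (by omega)
      have := ih (by omega) (by omega)
      omega

lemma P_nonneg (i : ℕ) (hi : i ≤ d.n) : 0 ≤ d.P i := by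
  have := d.Pmono' 0 i (by omega) hi
  have := d.hP0
  omega

lemma Q_nonneg (i : ℕ) (hi : i ≤ d.n) : 0 ≤ d.Q i := by
  have := d.Qmono' i d.n hi (le_refl _)
  have := d.hQn
  omega

lemma p_pos : 0 < d.P d.n := by
  have := d.Pstrict 0 d.n (by have := d.hn; omega) (le_refl _)
  have := d.hP0
  omega

lemma q_pos : 0 < d.Q 0 := by
  have := d.Qmono' 1 d.n d.hn (le_refl _)
  have h2 := d.hQmono 0 (by have := d.hn; omega)
  simp only [Nat.zero_add] at h2
  have := d.hQn
  omega

/-- slope of edge `i` (from `(P i, Q i)` to `(P (i+1), Q (i+1))`), for `i < n`. -/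
noncomputable def m (i : ℕ) : ℝ :=
  ((d.Q (i+1) : ℝ) - (d.Q i : ℝ)) / ((d.P (i+1) : ℝ) - (d.P i : ℝ))

/-- affine function extending edge `i`. -/
noncomputable def ell (i : ℕ) (x : ℝ) : ℝ := (d.Q i : ℝ) + d.m i * (x - (d.P i : ℝ))

lemma pdiff_pos (i : ℕ) (hi : i < d.n) : (0:ℝ) < (d.P (i+1) : ℝ) - (d.P i : ℝ) := by
  have := d.hPmono i hi
  have : (d.P i : ℝ) < (d.P (i+1) : ℝ) := by exact_mod_cast this
  linarith

lemma m_neg (i : ℕ) (hi : i < d.n) : d.m i < 0 := by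
  have h1 := d.pdiff_pos i hi
  have h2 : (d.Q (i+1) : ℝ) < (d.Q i : ℝ) := by exact_mod_cast d.hQmono i hi
  exact div_neg_of_neg_of_pos (by linarith) h1

lemma m_succ (i : ℕ) (hi : i + 1 < d.n) : d.m i < d.m (i+1) := by
  have h := d.hconv (i+1) (by omega) hi
  simp only [Nat.add_sub_cancel] at h
  have h' : ((d.Q i - d.Q (i+1) : ℤ) : ℝ) / ((d.P (i+1) - d.P i : ℤ) : ℝ) >
      ((d.Q (i+1) - d.Q (i+2) : ℤ) : ℝ) / ((d.P (i+2) - d.P (i+1) : ℤ) : ℝ) := by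
    have := (Rat.cast_lt (K := ℝ)).mpr h
    push_cast at this ⊢
    convert this using 2
  have h1 := d.pdiff_pos i (by omega)
  have h2 := d.pdiff_pos (i+1) hi
  unfold m
  push_cast at h' ⊢
  rw [div_lt_div_iff₀ h1 h2]
  rw [gt_iff_lt, div_lt_div_iff₀ h2 h1] at h'
  nlinarith
  
lemma m_mono : ∀ i j, i ≤ j → j < d.n → d.m i ≤ d.m j := by
  intro i j hij hjn
  induction j with
  | zero => have : i = 0 := by omega
            subst this; rfl
  | succ k ih =>
    rcases Nat.eq_or_lt_of_le hij with h | h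
    · subst h; rfl
    · have := ih (by omega) (by omega)
      have := d.m_succ k (by omega)
      linarith

lemma ell_self (i : ℕ) : d.ell i (d.P i) = d.Q i := by simp [ell]

lemma ell_next (i : ℕ) (hi : i < d.n) : d.ell i (d.P (i+1)) = d.Q (i+1) := by
  have h1 := d.pdiff_pos i hi
  unfold ell m
  field_simp
  ring

lemma ell_antitone (i : ℕ) (hi : i < d.n) : ∀ x y : ℝ, x ≤ y → d.ell i y ≤ d.ell i x := by
  intro x y hxy
  unfold ell
  have := d.m_neg i hi
  nlinarith

/-- chord inequality: every edge line lies below all the vertices. -/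
lemma chord (i : ℕ) (hi : i ≤ d.n) (j : ℕ) (hj : j < d.n) : d.ell j (d.P i) ≤ d.Q i := by
  have hstep : ∀ x y : ℝ, d.ell j x = d.ell j y + d.m j * (x - y) := by
    intro x y; unfold ell; ring
  have hQstep : ∀ k, k < d.n → (d.Q (k+1) : ℝ) =
      (d.Q k : ℝ) + d.m k * ((d.P (k+1) : ℝ) - (d.P k : ℝ)) := by
    intro k hk
    have := d.ell_next k hk
    unfold ell at this
    linarith
  rcases le_or_gt j i with hji | hij
  · induction i with
    | zero =>
      have : j = 0 := by omega
      subst this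
      rw [d.ell_self]
    | succ k ih =>
      rcases Nat.eq_or_lt_of_le hji with h | h
      · rw [← h, d.ell_self]
      · have hk : d.ell j (d.P k) ≤ d.Q k := ih (by omega) (by omega)
        have hΔ := d.pdiff_pos k (by omega)
        have hm : d.m j ≤ d.m k := d.m_mono j k (by omega) (by omega)
        have hq := hQstep k (by omega)
        rw [hstep (d.P (k+1)) (d.P k)]
        nlinarith
  · have key : ∀ t, ∀ i, i + t = j → d.ell j (d.P i) ≤ d.Q i := by
      intro t
      induction t with
      | zero =>
        intro i hi0
        have : i = j := by omega
        subst this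
        rw [d.ell_self]
      | succ t iht =>
        intro i hi0
        have hnext : d.ell j (d.P (i+1)) ≤ d.Q (i+1) := iht (i+1) (by omega)
        have hΔ := d.pdiff_pos i (by omega)
        have hm : d.m i ≤ d.m j := d.m_mono i j (by omega) hj
        have hq := hQstep i (by omega)
        have := hstep (d.P i) (d.P (i+1))
        nlinarith
    exact key (j - i) i (by omega)

/-- `Haux i x = max(0, ℓ_0 x, ..., ℓ_{i-1} x)`. -/
noncomputable def Haux : ℕ → ℝ → ℝ
  | 0 => fun _ => 0
  | (i+1) => fun x => max (Haux i x) (d.ell i x)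

/-- The upper boundary function of `Γ₋`. -/
noncomputable def H (x : ℝ) : ℝ := d.Haux d.n x

lemma Haux_nonneg (i : ℕ) (x : ℝ) : 0 ≤ d.Haux i x := by
  induction i with
  | zero => simp [Haux]
  | succ k ih => simp only [Haux]; exact le_max_of_le_left ih

lemma ell_le_Haux (j i : ℕ) (hj : j < i) (x : ℝ) : d.ell j x ≤ d.Haux i x := by
  induction i with
  | zero => omega
  | succ k ih =>
    rcases Nat.eq_or_lt_of_le (Nat.lt_succ_iff.mp hj) with h | h
    · subst h; simp [Haux]
    · exact le_max_of_le_left (ih h)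

lemma Haux_le (i : ℕ) (x : ℝ) (c : ℝ) (hc : 0 ≤ c) (h : ∀ j < i, d.ell j x ≤ c) :
    d.Haux i x ≤ c := by
  induction i with
  | zero => simpa [Haux] using hc
  | succ k ih =>
    simp only [Haux, max_le_iff]
    exact ⟨ih (fun j hj => h j (by omega)), h k (by omega)⟩

lemma ell_continuous (j : ℕ) : Continuous (d.ell j) := by
  unfold ell; fun_prop

lemma H_continuous : Continuous d.H := by
  unfold H
  induction d.n with
  | zero => simpa [Haux] using continuous_const
  | succ k ih => exact Continuous.max ih (d.ell_continuous k)

lemma ell_convex (j : ℕ) : ConvexOn ℝ univ (d.ell j) := by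
  refine ⟨convex_univ, ?_⟩
  intro x _ y _ a b ha hb hab
  have : a • d.ell j x + b • d.ell j y = d.ell j (a • x + b • y) := by
    simp only [smul_eq_mul, ell]
    linear_combination ((d.Q j : ℝ) - d.m j * (d.P j : ℝ)) * hab
  linarith

lemma H_convex : ConvexOn ℝ univ d.H := by
  unfold H
  induction d.n with
  | zero =>
    rw [show d.Haux 0 = fun _ : ℝ => (0:ℝ) from funext fun x => by simp [Haux]]
    exact convexOn_const 0 convex_univ
  | succ k ih => exact ConvexOn.sup ih (d.ell_convex k)

lemma Haux_antitone (i : ℕ) (hi : i ≤ d.n) : Antitone (d.Haux i) := by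
  induction i with
  | zero => intro x y _; simp [Haux]
  | succ k ih =>
    intro x y hxy
    simp only [Haux]
    exact max_le_max (ih (by omega) hxy) (d.ell_antitone k (by omega) x y hxy)

lemma H_antitone : Antitone d.H := d.Haux_antitone d.n le_rfl

lemma H_nonneg (x : ℝ) : 0 ≤ d.H x := d.Haux_nonneg d.n x

lemma H_vertex (i : ℕ) (hi : i ≤ d.n) : d.H (d.P i) = d.Q i := by
  have h1 : d.H (d.P i) ≤ d.Q i :=
    d.Haux_le d.n _ _ (by exact_mod_cast d.Q_nonneg i hi)
      (fun j hj => d.chord i hi j hj)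
  have h2 : (d.Q i : ℝ) ≤ d.H (d.P i) := by
    rcases Nat.eq_or_lt_of_le hi with h | h
    · subst h
      rw [d.hQn]
      exact_mod_cast d.H_nonneg _
    · have := d.ell_le_Haux i d.n h (d.P i)
      rwa [d.ell_self] at this
  linarith

lemma ell_le_edge (i : ℕ) (hi : i < d.n) (j : ℕ) (hj : j < d.n) (x : ℝ)
    (hx : x ∈ Icc ((d.P i : ℝ)) ((d.P (i+1) : ℝ))) : d.ell j x ≤ d.ell i x := by
  obtain ⟨hx1, hx2⟩ := hx
  have hΔ := d.pdiff_pos i hi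
  set t : ℝ := (x - (d.P i : ℝ)) / ((d.P (i+1) : ℝ) - (d.P i : ℝ)) with ht
  have ht0 : 0 ≤ t := div_nonneg (by linarith) (by linarith)
  have ht1 : t ≤ 1 := (div_le_one hΔ).mpr (by linarith)
  have htx : x - (d.P i : ℝ) = t * ((d.P (i+1) : ℝ) - (d.P i : ℝ)) := by
    rw [ht]
    exact (div_mul_cancel₀ _ (ne_of_gt hΔ)).symm
  have c1 := d.chord i (by omega) j hj
  have c2 := d.chord (i+1) (by omega) j hj
  have e1 : d.ell j x = d.ell j (d.P i) + d.m j * (x - (d.P i : ℝ)) := by unfold ell; ring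
  have e2 : d.ell i x = (d.Q i : ℝ) + d.m i * (x - (d.P i : ℝ)) := rfl
  have e3 : d.ell j (d.P (i+1)) = d.ell j (d.P i) + d.m j * ((d.P (i+1) : ℝ) - (d.P i : ℝ)) := by
    unfold ell; ring
  have e4 : (d.Q (i+1) : ℝ) = (d.Q i : ℝ) + d.m i * ((d.P (i+1) : ℝ) - (d.P i : ℝ)) := by
    have := d.ell_next i hi
    unfold ell at this
    linarith
  nlinarith [mul_nonneg ht0 (sub_nonneg.mpr c2), mul_nonneg (sub_nonneg.mpr ht1) (sub_nonneg.mpr c1)]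

lemma ell_edge_nonneg (i : ℕ) (hi : i < d.n) (x : ℝ)
    (hx : x ∈ Icc ((d.P i : ℝ)) ((d.P (i+1) : ℝ))) : 0 ≤ d.ell i x := by
  obtain ⟨hx1, hx2⟩ := hx
  have h1 : d.ell i x ≥ d.ell i (d.P (i+1)) := d.ell_antitone i hi x _ hx2
  rw [d.ell_next i hi] at h1
  have := d.Q_nonneg (i+1) (by omega)
  have : ((d.Q (i+1) : ℤ) : ℝ) ≥ 0 := by exact_mod_cast this
  linarith

lemma H_eq_edge (i : ℕ) (hi : i < d.n) (x : ℝ)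
    (hx : x ∈ Icc ((d.P i : ℝ)) ((d.P (i+1) : ℝ))) : d.H x = d.ell i x := by
  have h1 : d.H x ≤ d.ell i x :=
    d.Haux_le d.n x _ (d.ell_edge_nonneg i hi x hx) (fun j hj => d.ell_le_edge i hi j hj x hx)
  have h2 := d.ell_le_Haux i d.n hi x
  unfold H at h1 ⊢
  linarith

lemma H_zero (x : ℝ) (hx : (d.P d.n : ℝ) ≤ x) : d.H x = 0 := by
  refine le_antisymm (d.Haux_le d.n x 0 le_rfl ?_) (d.H_nonneg x)
  intro j hj
  have h1 : d.ell j x ≤ d.ell j (d.P d.n) := d.ell_antitone j hj _ _ hx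
  have h2 := d.chord d.n le_rfl j hj
  rw [d.hQn] at h2
  simpa using h1.trans h2

lemma H_pos (x : ℝ) (hx : x < (d.P d.n : ℝ)) : 0 < d.H x := by
  obtain ⟨i0, hi0⟩ : ∃ i0, i0 + 1 = d.n := ⟨d.n - 1, by have := d.hn; omega⟩
  have hi0n : i0 < d.n := by omega
  have h1 : d.ell i0 (d.P d.n) = 0 := by
    rw [← hi0, d.ell_next i0 (by omega)]
    rw [hi0, d.hQn]
    simp
  have hm := d.m_neg i0 hi0n
  have h2 : d.ell i0 x > d.ell i0 (d.P d.n) := by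
    unfold ell
    have : (x - (d.P i0 : ℝ)) < ((d.P d.n : ℝ) - (d.P i0 : ℝ)) := by linarith
    nlinarith
  have h3 := d.ell_le_Haux i0 d.n hi0n x
  unfold H
  linarith

/-- The Newton polyhedron, described by inequalities. -/
def Kset : Set (ℝ × ℝ) := {z | 0 ≤ z.1 ∧ d.H z.1 ≤ z.2}

/-- The region below the graph of `H`. -/
def G : Set (ℝ × ℝ) := {z | z.1 ∈ Icc (0:ℝ) ((d.P d.n : ℝ)) ∧ z.2 ∈ Icc (0:ℝ) (d.H z.1)}

def Sv : Set (ℝ × ℝ) := {x : ℝ × ℝ | ∃ i ≤ d.n, x = ((d.P i : ℝ), (d.Q i : ℝ))}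

lemma K_convex : Convex ℝ d.Kset := by
  have h := (d.H_convex.subset (subset_univ (Ici (0:ℝ))) (convex_Ici 0)).convex_epigraph
  exact h

lemma hull_subset_K : convexHull ℝ d.Sv ⊆ d.Kset := by
  refine convexHull_min ?_ d.K_convex
  rintro z ⟨i, hi, rfl⟩
  constructor
  · show (0:ℝ) ≤ ((d.P i : ℝ))
    exact_mod_cast d.P_nonneg i hi
  · show d.H ((d.P i : ℝ)) ≤ ((d.Q i : ℝ))
    rw [d.H_vertex i hi]

lemma sum_subset_K : convexHull ℝ d.Sv + (Ici (0:ℝ) ×ˢ Ici (0:ℝ)) ⊆ d.Kset := by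
  rintro z ⟨a, ha, b, ⟨hb1, hb2⟩, rfl⟩
  obtain ⟨ha1, ha2⟩ := d.hull_subset_K ha
  simp only [mem_Ici] at hb1 hb2
  constructor
  · simp only [Prod.fst_add]
    linarith
  · simp only [Prod.fst_add, Prod.snd_add]
    have : d.H (a.1 + b.1) ≤ d.H a.1 := d.H_antitone (by linarith)
    linarith

lemma K_subset_sum : d.Kset ⊆ convexHull ℝ d.Sv + (Ici (0:ℝ) ×ˢ Ici (0:ℝ)) := by
  classical
  rintro ⟨x, y⟩ ⟨hx, hy⟩
  simp only at hx hy
  rcases le_or_gt ((d.P d.n : ℝ)) x with hpx | hpx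
  · refine ⟨((d.P d.n : ℝ), (d.Q d.n : ℝ)), subset_convexHull ℝ _ ⟨d.n, le_rfl, rfl⟩,
      (x - (d.P d.n : ℝ), y), ⟨by simpa using hpx, ?_⟩, ?_⟩
    · have h0 := d.H_nonneg x
      simp only [mem_Ici]
      show (0:ℝ) ≤ y
      linarith
    · have hq0 : ((d.Q d.n : ℝ)) = 0 := by rw [d.hQn]; simp
      show (((d.P d.n : ℝ), (d.Q d.n : ℝ)) : ℝ × ℝ) + (x - (d.P d.n : ℝ), y) = (x, y)
      rw [Prod.mk_add_mk, hq0]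
      congr 1 <;> ring
  · -- find the edge containing x
    have h0x : (d.P 0 : ℝ) ≤ x := by rw [d.hP0]; exact_mod_cast hx
    set pred : ℕ → Prop := fun i => (d.P i : ℝ) ≤ x with hpred
    have hi0 : pred 0 := h0x
    set i := Nat.findGreatest pred (d.n - 1) with hidef
    have hile : i ≤ d.n - 1 := Nat.findGreatest_le _
    have hin : i < d.n := by have := d.hn; omega
    have hspec : pred i := Nat.findGreatest_spec (Nat.zero_le _) hi0
    have hup : x ≤ (d.P (i+1) : ℝ) := by
      rcases Nat.lt_or_ge i (d.n - 1) with h | h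
      · have h2 := Nat.findGreatest_is_greatest (lt_add_one i) (by omega)
        simp only [hpred, not_le] at h2
        linarith
      · have : i = d.n - 1 := by omega
        have : i + 1 = d.n := by omega
        rw [this]
        linarith
    have hΔ := d.pdiff_pos i hin
    set t : ℝ := (x - (d.P i : ℝ)) / ((d.P (i+1) : ℝ) - (d.P i : ℝ)) with ht
    have ht0 : 0 ≤ t := div_nonneg (by exact sub_nonneg.mpr hspec) (by linarith)
    have ht1 : t ≤ 1 := (div_le_one hΔ).mpr (by linarith)
    have htx : x - (d.P i : ℝ) = t * ((d.P (i+1) : ℝ) - (d.P i : ℝ)) := by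
      rw [ht]
      exact (div_mul_cancel₀ _ (ne_of_gt hΔ)).symm
    have hseg : ((x, d.ell i x) : ℝ × ℝ) ∈ convexHull ℝ d.Sv := by
      have hmem1 : (((d.P i : ℝ), (d.Q i : ℝ)) : ℝ × ℝ) ∈ d.Sv := ⟨i, by omega, rfl⟩
      have hmem2 : (((d.P (i+1) : ℝ), (d.Q (i+1) : ℝ)) : ℝ × ℝ) ∈ d.Sv := ⟨i + 1, by omega, rfl⟩
      apply segment_subset_convexHull hmem1 hmem2
      refine ⟨1 - t, t, by linarith, ht0, by ring, ?_⟩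
      have e4 : (d.Q (i+1) : ℝ) = (d.Q i : ℝ) + d.m i * ((d.P (i+1) : ℝ) - (d.P i : ℝ)) := by
        have := d.ell_next i hin
        unfold ell at this
        linarith
      have comp1 : (1 - t) * (d.P i : ℝ) + t * (d.P (i+1) : ℝ) = x := by linarith [htx]
      have comp2 : (1 - t) * (d.Q i : ℝ) + t * (d.Q (i+1) : ℝ) = d.ell i x := by
        unfold ell
        rw [e4]
        linear_combination (-(d.m i)) * htx
      have : ((1 - t) • ((d.P i : ℝ), (d.Q i : ℝ)) + t • ((d.P (i+1) : ℝ), (d.Q (i+1) : ℝ)) : ℝ × ℝ)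
          = (x, d.ell i x) := by
        simp only [Prod.smul_mk, smul_eq_mul, Prod.mk_add_mk]
        rw [comp1, comp2]
      rw [this]
    refine ⟨(x, d.ell i x), hseg, (0, y - d.ell i x), ⟨by simp, ?_⟩, ?_⟩
    · have h1 : d.ell i x ≤ d.H x := d.ell_le_Haux i d.n hin x
      simp only [mem_Ici]
      show (0:ℝ) ≤ y - d.ell i x
      linarith
    · show ((x, d.ell i x) : ℝ × ℝ) + (0, y - d.ell i x) = (x, y)
      rw [Prod.mk_add_mk]
      congr 1 <;> ring

lemma K_eq : convexHull ℝ d.Sv + (Ici (0:ℝ) ×ˢ Ici (0:ℝ)) = d.Kset :=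
  le_antisymm d.sum_subset_K d.K_subset_sum

lemma pre_eq : (Ici (0:ℝ) ×ˢ Ici (0:ℝ)) \ (convexHull ℝ d.Sv + (Ici (0:ℝ) ×ˢ Ici (0:ℝ))) =
    {z : ℝ × ℝ | 0 ≤ z.1 ∧ 0 ≤ z.2 ∧ z.2 < d.H z.1} := by
  rw [d.K_eq]
  ext ⟨x, y⟩
  simp only [mem_diff, mem_prod, mem_Ici, Kset, mem_setOf_eq, not_and, not_le]
  constructor
  · rintro ⟨⟨h1, h2⟩, h3⟩
    exact ⟨h1, h2, h3 h1⟩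
  · rintro ⟨h1, h2, h3⟩
    exact ⟨⟨h1, h2⟩, fun _ => h3⟩

lemma G_closed : IsClosed d.G := by
  have : d.G = ({z : ℝ × ℝ | 0 ≤ z.1} ∩ {z : ℝ × ℝ | z.1 ≤ (d.P d.n : ℝ)}) ∩
      ({z : ℝ × ℝ | 0 ≤ z.2} ∩ {z : ℝ × ℝ | z.2 ≤ d.H z.1}) := by
    ext z
    simp only [G, mem_Icc, mem_inter_iff, mem_setOf_eq]
    try tauto
  rw [this]
  refine IsClosed.inter (IsClosed.inter ?_ ?_) (IsClosed.inter ?_ ?_)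
  · exact isClosed_le continuous_const continuous_fst
  · exact isClosed_le continuous_fst continuous_const
  · exact isClosed_le continuous_const continuous_snd
  · exact isClosed_le continuous_snd (d.H_continuous.comp continuous_fst)

lemma gamma_eq : closure ((Ici (0:ℝ) ×ˢ Ici (0:ℝ)) \
    (convexHull ℝ d.Sv + (Ici (0:ℝ) ×ˢ Ici (0:ℝ)))) = d.G := by
  rw [d.pre_eq]
  apply le_antisymm
  · apply closure_minimal _ d.G_closed
    rintro ⟨x, y⟩ ⟨h1, h2, h3⟩
    simp only at h1 h2 h3
    have hxp : x ≤ (d.P d.n : ℝ) := by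
      by_contra h
      push_neg at h
      rw [d.H_zero x h.le] at h3
      linarith
    exact ⟨⟨h1, hxp⟩, ⟨h2, h3.le⟩⟩
  · rintro ⟨x, y⟩ ⟨⟨hx0, hxp⟩, ⟨hy0, hyH⟩⟩
    simp only [mem_Icc] at hx0 hxp hy0 hyH
    have hppos : (0:ℝ) < (d.P d.n : ℝ) := by exact_mod_cast d.p_pos
    have key : ∀ k : ℕ, ((1 - 1/((k:ℝ)+2)) • ((x,y) : ℝ × ℝ)) ∈
        {z : ℝ × ℝ | 0 ≤ z.1 ∧ 0 ≤ z.2 ∧ z.2 < d.H z.1} := by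
      intro k
      have hk0 : (0:ℝ) ≤ (k:ℝ) := Nat.cast_nonneg k
      have hk2 : (0:ℝ) < (k:ℝ) + 2 := by linarith
      have hc1 : 1/((k:ℝ)+2) ≤ 1/2 := one_div_le_one_div_of_le (by norm_num) (by linarith)
      have hc2 : 0 < 1/((k:ℝ)+2) := by positivity
      set ck : ℝ := 1 - 1/((k:ℝ)+2) with hck
      have hc0 : 0 < ck := by rw [hck]; linarith
      have hclt : ck < 1 := by rw [hck]; linarith
      have hsm : ((ck • ((x,y) : ℝ × ℝ)) : ℝ × ℝ) = (ck * x, ck * y) := rfl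
      rw [hsm]
      have hcx_lt : ck * x < (d.P d.n : ℝ) := by nlinarith
      refine ⟨mul_nonneg hc0.le hx0, mul_nonneg hc0.le hy0, ?_⟩
      rcases eq_or_lt_of_le hy0 with hy | hy
      · have : ck * y = 0 := by rw [← hy]; ring
        rw [this]
        exact d.H_pos _ hcx_lt
      · have h1 : ck * y < y := by nlinarith
        have h2 : ck * x ≤ x := by nlinarith
        have h3 : d.H x ≤ d.H (ck * x) := d.H_antitone h2
        calc ck * y < y := h1
          _ ≤ d.H x := hyH
          _ ≤ d.H (ck * x) := h3
    have h1 : Filter.Tendsto (fun k : ℕ => 1/((k:ℝ)+2)) Filter.atTop (𝓝 0) := by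
      have h := (tendsto_one_div_atTop_nhds_zero_nat (𝕜 := ℝ)).comp (Filter.tendsto_add_atTop_nat 2)
      have heq : (fun k : ℕ => 1/((k:ℝ)+2)) = (fun n : ℕ => 1 / (n:ℝ)) ∘ (fun a => a + 2) := by
        funext k
        simp only [Function.comp_apply]
        push_cast
        ring
      rw [heq]
      exact h
    have h2 : Filter.Tendsto (fun k : ℕ => 1 - 1/((k:ℝ)+2)) Filter.atTop (𝓝 1) := by
      have := Filter.Tendsto.const_sub (1:ℝ) h1
      simpa using this
    have h3 : Filter.Tendsto (fun k : ℕ => (1 - 1/((k:ℝ)+2)) • ((x,y) : ℝ × ℝ))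
        Filter.atTop (𝓝 ((x,y) : ℝ × ℝ)) := by
      have := h2.smul_const ((x,y) : ℝ × ℝ)
      simpa using this
    exact mem_closure_of_tendsto h3 (Filter.Eventually.of_forall key)

lemma slice_G (x : ℝ) : Prod.mk x ⁻¹' d.G =
    if x ∈ Icc (0:ℝ) ((d.P d.n : ℝ)) then Icc (0:ℝ) (d.H x) else ∅ := by
  split_ifs with hx
  · ext y
    simp only [mem_preimage, G, mem_setOf_eq, mem_Icc] at *
    tauto
  · ext y
    simp only [mem_preimage, G, mem_setOf_eq, mem_Icc, mem_empty_iff_false, iff_false] at *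
    tauto

lemma volume_G : volume d.G = ENNReal.ofReal (∫ x in (0:ℝ)..((d.P d.n : ℝ)), d.H x) := by
  have hmeas : MeasurableSet d.G := d.G_closed.measurableSet
  rw [Measure.volume_eq_prod, Measure.prod_apply hmeas]
  have hslice : ∀ x : ℝ, volume (Prod.mk x ⁻¹' d.G) =
      (Icc (0:ℝ) ((d.P d.n : ℝ))).indicator (fun x => ENNReal.ofReal (d.H x)) x := by
    intro x
    rw [d.slice_G x]
    by_cases hx : x ∈ Icc (0:ℝ) ((d.P d.n : ℝ))
    · rw [if_pos hx, indicator_of_mem hx, Real.volume_Icc, sub_zero]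
    · rw [if_neg hx, indicator_of_notMem hx, measure_empty]
  rw [lintegral_congr hslice, lintegral_indicator measurableSet_Icc]
  have hint : IntegrableOn d.H (Icc (0:ℝ) ((d.P d.n : ℝ))) volume :=
    d.H_continuous.integrableOn_Icc
  rw [← ofReal_integral_eq_lintegral_ofReal hint
      (Filter.Eventually.of_forall (fun x => d.H_nonneg x))]
  congr 1
  rw [MeasureTheory.integral_Icc_eq_integral_Ioc,
    ← intervalIntegral.integral_of_le (by exact_mod_cast d.p_pos.le)]

open intervalIntegral in
lemma integral_edge (i : ℕ) (hi : i < d.n) :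
    ∫ x in ((d.P i : ℝ))..((d.P (i+1) : ℝ)), d.H x =
      ((d.P (i+1) : ℝ) - (d.P i : ℝ)) * ((d.Q i : ℝ) + (d.Q (i+1) : ℝ)) / 2 := by
  have hΔ := d.pdiff_pos i hi
  have hab : (d.P i : ℝ) ≤ (d.P (i+1) : ℝ) := by linarith
  have hcongr : EqOn d.H (d.ell i) (uIcc ((d.P i : ℝ)) ((d.P (i+1) : ℝ))) := by
    intro x hx
    rw [uIcc_of_le hab] at hx
    exact d.H_eq_edge i hi x hx
  rw [intervalIntegral.integral_congr hcongr]
  have hrepr : ∀ x : ℝ, d.ell i x = d.m i * x + ((d.Q i : ℝ) - d.m i * (d.P i : ℝ)) := by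
    intro x; unfold ell; ring
  rw [intervalIntegral.integral_congr (g := fun x => d.m i * x + ((d.Q i : ℝ) - d.m i * (d.P i : ℝ)))
    (fun x _ => hrepr x)]
  have hint1 : IntervalIntegrable (fun x : ℝ => d.m i * x) volume
      ((d.P i : ℝ)) ((d.P (i+1) : ℝ)) :=
    (continuous_const.mul continuous_id').intervalIntegrable _ _
  rw [intervalIntegral.integral_add hint1 (intervalIntegrable_const)]
  rw [intervalIntegral.integral_const_mul, intervalIntegral.integral_const]
  rw [show (∫ x in ((d.P i : ℝ))..((d.P (i+1) : ℝ)), x) =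
    (((d.P (i+1) : ℝ))^2 - ((d.P i : ℝ))^2)/2 from (by exact integral_id)]
  have e4 : (d.Q (i+1) : ℝ) = (d.Q i : ℝ) + d.m i * ((d.P (i+1) : ℝ) - (d.P i : ℝ)) := by
    have := d.ell_next i hi
    unfold ell at this
    linarith
  simp only [smul_eq_mul]
  linear_combination (-(((d.P (i+1) : ℝ) - (d.P i : ℝ))/2)) * e4

lemma integral_H : ∫ x in (0:ℝ)..((d.P d.n : ℝ)), d.H x =
    ∑ i ∈ Finset.range d.n, ((d.P (i+1) : ℝ) - (d.P i : ℝ)) * ((d.Q i : ℝ) + (d.Q (i+1) : ℝ)) / 2 := by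
  have hadj : ∀ i < d.n, IntervalIntegrable d.H volume
      ((d.P i : ℝ)) ((d.P (i+1) : ℝ)) := fun i _ => d.H_continuous.intervalIntegrable _ _
  have := intervalIntegral.sum_integral_adjacent_intervals (μ := volume)
    (a := fun i => ((d.P i : ℝ))) (n := d.n) hadj
  have this2 : ∑ k ∈ Finset.range d.n, ∫ x in ((d.P k : ℝ))..((d.P (k+1) : ℝ)), d.H x =
      ∫ x in ((d.P 0 : ℝ))..((d.P d.n : ℝ)), d.H x := this
  rw [show ((d.P 0 : ℝ)) = (0:ℝ) by rw [d.hP0]; simp] at this2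
  rw [← this2]
  exact Finset.sum_congr rfl (fun i hi => d.integral_edge i (Finset.mem_range.mp hi))

lemma volume_G_toReal : (volume d.G).toReal =
    ∑ i ∈ Finset.range d.n, ((d.P (i+1) : ℝ) - (d.P i : ℝ)) * ((d.Q i : ℝ) + (d.Q (i+1) : ℝ)) / 2 := by
  rw [d.volume_G, d.integral_H]
  rw [ENNReal.toReal_ofReal]
  apply Finset.sum_nonneg
  intro i hi
  have h1 := d.pdiff_pos i (Finset.mem_range.mp hi)
  have h2 : (0:ℝ) ≤ (d.Q i : ℝ) := by exact_mod_cast d.Q_nonneg i (by have := Finset.mem_range.mp hi; omega)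
  have h3 : (0:ℝ) ≤ (d.Q (i+1) : ℝ) := by exact_mod_cast d.Q_nonneg (i+1) (by have := Finset.mem_range.mp hi; omega)
  positivity

lemma probe (z : ℝ × ℝ) (hz : z ∈ interior d.G) (v : ℝ × ℝ) :
    ∃ t : ℝ, 0 < t ∧ z + t • v ∈ d.G := by
  have hmem : d.G ∈ 𝓝 z := mem_interior_iff_mem_nhds.mp hz
  have hcont : Filter.Tendsto (fun t : ℝ => z + t • v) (𝓝 0) (𝓝 z) := by
    have h : Continuous (fun t : ℝ => z + t • v) := by
      exact continuous_const.add (continuous_id.smul continuous_const)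
    have := h.tendsto 0
    simpa using this
  have hev : ∀ᶠ t in 𝓝 (0:ℝ), z + t • v ∈ d.G := hcont.eventually hmem
  have hev' : ∀ᶠ t in 𝓝[>] (0:ℝ), z + t • v ∈ d.G := hev.filter_mono nhdsWithin_le_nhds
  obtain ⟨t, ht, htG⟩ := (hev'.and (eventually_mem_nhdsWithin)).exists
  exact ⟨t, htG, ht⟩

lemma interior_G : interior d.G =
    {z : ℝ × ℝ | 0 < z.1 ∧ z.1 < (d.P d.n : ℝ) ∧ 0 < z.2 ∧ z.2 < d.H z.1} := by
  apply le_antisymm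
  · rintro ⟨x, y⟩ hz
    obtain ⟨⟨hx0, hxp⟩, hy0, hyH⟩ := interior_subset hz
    obtain ⟨t1, ht1, hG1⟩ := d.probe (x, y) hz (-1, 0)
    obtain ⟨t2, ht2, hG2⟩ := d.probe (x, y) hz (1, 0)
    obtain ⟨t3, ht3, hG3⟩ := d.probe (x, y) hz (0, -1)
    obtain ⟨t4, ht4, hG4⟩ := d.probe (x, y) hz (0, 1)
    have e1 : ((x, y) : ℝ × ℝ) + t1 • ((-1 : ℝ), (0:ℝ)) = (x - t1, y) := by
      rw [Prod.smul_mk, Prod.mk_add_mk]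
      congr 1 <;> simp <;> ring
    have e2 : ((x, y) : ℝ × ℝ) + t2 • ((1 : ℝ), (0:ℝ)) = (x + t2, y) := by
      rw [Prod.smul_mk, Prod.mk_add_mk]
      congr 1 <;> simp
    have e3 : ((x, y) : ℝ × ℝ) + t3 • ((0 : ℝ), (-1:ℝ)) = (x, y - t3) := by
      rw [Prod.smul_mk, Prod.mk_add_mk]
      congr 1 <;> simp <;> ring
    have e4 : ((x, y) : ℝ × ℝ) + t4 • ((0 : ℝ), (1:ℝ)) = (x, y + t4) := by
      rw [Prod.smul_mk, Prod.mk_add_mk]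
      congr 1 <;> simp
    rw [e1] at hG1
    rw [e2] at hG2
    rw [e3] at hG3
    rw [e4] at hG4
    obtain ⟨⟨h1, _⟩, _⟩ := hG1
    obtain ⟨⟨_, h2⟩, _⟩ := hG2
    obtain ⟨_, h3, _⟩ := hG3
    obtain ⟨_, _, h4⟩ := hG4
    simp only at h1 h2 h3 h4
    refine ⟨by linarith, by linarith, by linarith, ?_⟩
    have h4' : y + t4 ≤ d.H x := h4
    linarith
  · apply interior_maximal
    · rintro ⟨x, y⟩ ⟨h1, h2, h3, h4⟩
      exact ⟨⟨h1.le, h2.le⟩, h3.le, h4.le⟩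
    · have : {z : ℝ × ℝ | 0 < z.1 ∧ z.1 < (d.P d.n : ℝ) ∧ 0 < z.2 ∧ z.2 < d.H z.1} =
          ({z : ℝ × ℝ | 0 < z.1} ∩ {z : ℝ × ℝ | z.1 < (d.P d.n : ℝ)}) ∩
          ({z : ℝ × ℝ | 0 < z.2} ∩ {z : ℝ × ℝ | z.2 < d.H z.1}) := by
        ext z
        simp only [mem_inter_iff, mem_setOf_eq]
        tauto
      rw [this]
      refine IsOpen.inter (IsOpen.inter ?_ ?_) (IsOpen.inter ?_ ?_)
      · exact isOpen_lt continuous_const continuous_fst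
      · exact isOpen_lt continuous_fst continuous_const
      · exact isOpen_lt continuous_const continuous_snd
      · exact isOpen_lt continuous_snd (d.H_continuous.comp continuous_fst)

lemma unitSq_subset_iff (i j : ℕ) : unitSq i j ⊆ d.G ↔
    ((i:ℝ) + 1 ≤ (d.P d.n : ℝ) ∧ (j:ℝ) + 1 ≤ d.H ((i:ℝ) + 1)) := by
  constructor
  · intro hsub
    have hc : (((i:ℝ) + 1, (j:ℝ) + 1) : ℝ × ℝ) ∈ unitSq i j := by
      constructor <;> simp only [mem_Icc] <;> push_cast <;> constructor <;> linarith
    obtain ⟨⟨_, h1⟩, _, h2⟩ := hsub hc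
    exact ⟨h1, h2⟩
  · rintro ⟨h1, h2⟩ ⟨x, y⟩ ⟨hx, hy⟩
    simp only [mem_Icc] at hx hy
    push_cast at hx hy
    have hHmono : d.H ((i:ℝ) + 1) ≤ d.H x := d.H_antitone (by linarith)
    refine ⟨⟨by linarith, by linarith⟩, ⟨by linarith, by linarith⟩⟩

lemma v_count : {ij : ℕ × ℕ | unitSq ij.1 ij.2 ⊆ d.G}.ncard =
    ∑ i ∈ Finset.range (d.P d.n).toNat, ⌊d.H ((i:ℝ) + 1)⌋₊ := by
  classical
  have hset : {ij : ℕ × ℕ | unitSq ij.1 ij.2 ⊆ d.G} =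
      ↑((Finset.range (d.P d.n).toNat).biUnion
        (fun i => ({i} : Finset ℕ) ×ˢ Finset.range ⌊d.H ((i:ℝ) + 1)⌋₊)) := by
    ext ⟨i, j⟩
    simp only [Finset.coe_biUnion, Finset.coe_product, mem_iUnion, Finset.mem_coe,
      Finset.mem_range, mem_setOf_eq, mem_prod, Finset.mem_singleton, Finset.coe_singleton,
      mem_singleton_iff]
    rw [d.unitSq_subset_iff i j]
    have hp0 : (0:ℤ) ≤ d.P d.n := d.p_pos.le
    constructor
    · rintro ⟨h1, h2⟩
      refine ⟨i, ?_, rfl, ?_⟩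
      · have : (i:ℤ) + 1 ≤ d.P d.n := by exact_mod_cast h1
        omega
      · have := (Nat.le_floor_iff (d.H_nonneg _)).mpr (by push_cast; linarith : ((j+1 : ℕ):ℝ) ≤ d.H ((i:ℝ)+1))
        omega
    · rintro ⟨i', hi', rfl, hj⟩
      constructor
      · have : (i:ℤ) + 1 ≤ d.P d.n := by omega
        exact_mod_cast this
      · have := (Nat.le_floor_iff (d.H_nonneg _)).mp (by omega : j + 1 ≤ ⌊d.H ((i:ℝ)+1)⌋₊)
        push_cast at this
        linarith
  rw [hset, Set.ncard_coe_finset, Finset.card_biUnion]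
  · apply Finset.sum_congr rfl
    intro i _
    rw [Finset.card_product, Finset.card_singleton, one_mul, Finset.card_range]
  · intro a _ b _ hab
    simp only [Finset.disjoint_left]
    rintro ⟨i, j⟩ hmem1 hmem2
    simp only [Finset.mem_product, Finset.mem_singleton] at hmem1 hmem2
    exact hab (hmem1.1 ▸ hmem2.1 ▸ rfl)

lemma r_count : {x : ℝ × ℝ | x ∈ interior d.G ∧ ∃ a b : ℤ, x = ((a:ℝ), (b:ℝ))}.ncard =
    ∑ a ∈ Finset.Ioo (0:ℤ) (d.P d.n), (⌈d.H (a:ℝ)⌉ - 1).toNat := by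
  classical
  set F : Finset (ℤ × ℤ) := (Finset.Ioo (0:ℤ) (d.P d.n)).biUnion
    (fun a => ({a} : Finset ℤ) ×ˢ Finset.Ioo (0:ℤ) ⌈d.H (a:ℝ)⌉) with hF
  have hset : {x : ℝ × ℝ | x ∈ interior d.G ∧ ∃ a b : ℤ, x = ((a:ℝ), (b:ℝ))} =
      (fun ab : ℤ × ℤ => (((ab.1:ℝ), (ab.2:ℝ)) : ℝ × ℝ)) '' ↑F := by
    ext ⟨x, y⟩
    simp only [mem_setOf_eq, mem_image, Finset.mem_coe, hF, Finset.mem_biUnion,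
      Finset.mem_product, Finset.mem_singleton, Finset.mem_Ioo, d.interior_G]
    constructor
    · rintro ⟨⟨h1, h2, h3, h4⟩, a, b, heq⟩
      rw [Prod.mk.injEq] at heq
      obtain ⟨hx, hy⟩ := heq
      subst hx
      subst hy
      refine ⟨(a, b), ⟨a, ⟨by exact_mod_cast h1, by exact_mod_cast h2⟩, rfl,
        by exact_mod_cast h3, Int.lt_ceil.mpr h4⟩, rfl⟩
    · rintro ⟨⟨a, b⟩, hmem, heq⟩
      obtain ⟨a', ⟨ha1, ha2⟩, heq2, hb1, hb2⟩ := hmem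
      subst heq2
      rw [Prod.mk.injEq] at heq
      obtain ⟨hx, hy⟩ := heq
      subst hx
      subst hy
      refine ⟨⟨by exact_mod_cast ha1, by exact_mod_cast ha2, by exact_mod_cast hb1,
        by exact_mod_cast Int.lt_ceil.mp hb2⟩, a, b, rfl⟩
  rw [hset]
  rw [Set.ncard_image_of_injective _ (by
    rintro ⟨a, b⟩ ⟨a', b'⟩ h
    simp only [Prod.mk.injEq] at h
    exact Prod.ext (by exact_mod_cast h.1) (by exact_mod_cast h.2))]
  rw [Set.ncard_coe_finset, hF, Finset.card_biUnion]
  · apply Finset.sum_congr rfl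
    intro a _
    rw [Finset.card_product, Finset.card_singleton, one_mul, Int.card_Ioo, sub_zero]
  · intro a _ b _ hab
    simp only [Finset.disjoint_left]
    rintro ⟨i, j⟩ hmem1 hmem2
    simp only [Finset.mem_product, Finset.mem_singleton] at hmem1 hmem2
    exact hab (hmem1.1 ▸ hmem2.1 ▸ rfl)

/-- `⌊H x⌋ + ⌈H x⌉` at integer points. -/
noncomputable def fl (x : ℤ) : ℤ := ⌊d.H (x:ℝ)⌋ + ⌈d.H (x:ℝ)⌉

lemma sum_reflect (a b : ℤ) (g : ℤ → ℤ) :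
    ∑ x ∈ Finset.Ioo a b, g x = ∑ x ∈ Finset.Ioo a b, g (a + b - x) := by
  apply Finset.sum_nbij' (i := fun x => a + b - x) (j := fun x => a + b - x)
  · intro x hx
    simp only [Finset.mem_Ioo] at hx ⊢
    omega
  · intro x hx
    simp only [Finset.mem_Ioo] at hx ⊢
    omega
  · intro x _
    omega
  · intro x _
    omega
  · intro x _
    congr 1
    omega

lemma H_reflect (i : ℕ) (hi : i < d.n) (x : ℝ)
    (hx : x ∈ Icc ((d.P i : ℝ)) ((d.P (i+1) : ℝ))) :
    d.H ((d.P i : ℝ) + (d.P (i+1) : ℝ) - x) = (d.Q i : ℝ) + (d.Q (i+1) : ℝ) - d.H x := by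
  obtain ⟨hx1, hx2⟩ := hx
  have hx' : (d.P i : ℝ) + (d.P (i+1) : ℝ) - x ∈ Icc ((d.P i : ℝ)) ((d.P (i+1) : ℝ)) :=
    ⟨by linarith, by linarith⟩
  rw [d.H_eq_edge i hi x ⟨hx1, hx2⟩, d.H_eq_edge i hi _ hx']
  have e4 : (d.Q (i+1) : ℝ) = (d.Q i : ℝ) + d.m i * ((d.P (i+1) : ℝ) - (d.P i : ℝ)) := by
    have := d.ell_next i hi
    unfold ell at this
    linarith
  unfold ell
  linear_combination -e4

lemma edge_sum (i : ℕ) (hi : i < d.n) :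
    ∑ x ∈ Finset.Ioc (d.P i) (d.P (i+1)), d.fl x =
      (d.P (i+1) - d.P i - 1) * (d.Q i + d.Q (i+1)) + 2 * d.Q (i+1) := by
  have hab : d.P i < d.P (i+1) := d.hPmono i hi
  rw [← Finset.Ioo_insert_right hab, Finset.sum_insert Finset.right_notMem_Ioo]
  have hend : d.fl (d.P (i+1)) = 2 * d.Q (i+1) := by
    unfold fl
    rw [show ((d.P (i+1) : ℤ) : ℝ) = ((d.P (i+1) : ℝ)) from rfl,
      d.H_vertex (i+1) (by omega), Int.floor_intCast, Int.ceil_intCast]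
    ring
  rw [hend]
  -- now the open-interval sum
  have key : ∀ x ∈ Finset.Ioo (d.P i) (d.P (i+1)),
      ⌈d.H ((d.P i + d.P (i+1) - x : ℤ) : ℝ)⌉ = (d.Q i + d.Q (i+1)) - ⌊d.H (x:ℝ)⌋ := by
    intro x hx
    simp only [Finset.mem_Ioo] at hx
    have hxIcc : ((x:ℤ):ℝ) ∈ Icc ((d.P i : ℝ)) ((d.P (i+1) : ℝ)) :=
      ⟨by exact_mod_cast hx.1.le, by exact_mod_cast hx.2.le⟩
    have hR := d.H_reflect i hi ((x:ℤ):ℝ) hxIcc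
    have hcast : ((d.P i + d.P (i+1) - x : ℤ) : ℝ) = (d.P i : ℝ) + (d.P (i+1) : ℝ) - ((x:ℤ):ℝ) := by
      push_cast
      ring
    rw [hcast, hR]
    have : ((d.Q i : ℝ)) + ((d.Q (i+1) : ℝ)) - d.H ((x:ℤ):ℝ) =
        -(d.H ((x:ℤ):ℝ)) + ((d.Q i + d.Q (i+1) : ℤ) : ℝ) := by
      push_cast
      ring
    rw [this, Int.ceil_add_intCast, Int.ceil_neg]
    ring
  have hrefl : ∑ x ∈ Finset.Ioo (d.P i) (d.P (i+1)), ⌈d.H (x:ℝ)⌉ =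
      ∑ x ∈ Finset.Ioo (d.P i) (d.P (i+1)), ((d.Q i + d.Q (i+1)) - ⌊d.H (x:ℝ)⌋) := by
    conv_lhs => rw [sum_reflect (d.P i) (d.P (i+1)) (fun x => ⌈d.H (x:ℝ)⌉)]
    exact Finset.sum_congr rfl key
  have hsplit : ∑ x ∈ Finset.Ioo (d.P i) (d.P (i+1)), d.fl x =
      (∑ x ∈ Finset.Ioo (d.P i) (d.P (i+1)), ⌊d.H (x:ℝ)⌋) +
      (∑ x ∈ Finset.Ioo (d.P i) (d.P (i+1)), ⌈d.H (x:ℝ)⌉) := by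
    rw [← Finset.sum_add_distrib]
    rfl
  rw [hsplit, hrefl, Finset.sum_sub_distrib, Finset.sum_const, Int.card_Ioo]
  have hcard : (((d.P (i+1) - d.P i - 1).toNat : ℤ)) = d.P (i+1) - d.P i - 1 := by omega
  rw [nsmul_eq_mul, hcard]
  ring

lemma total_sum : ∑ x ∈ Finset.Ioc (0:ℤ) (d.P d.n), d.fl x =
    ∑ i ∈ Finset.range d.n,
      ((d.P (i+1) - d.P i - 1) * (d.Q i + d.Q (i+1)) + 2 * d.Q (i+1)) := by
  have key : ∀ k ≤ d.n, ∑ x ∈ Finset.Ioc (d.P 0) (d.P k), d.fl x =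
      ∑ i ∈ Finset.range k,
        ((d.P (i+1) - d.P i - 1) * (d.Q i + d.Q (i+1)) + 2 * d.Q (i+1)) := by
    intro k
    induction k with
    | zero => intro _; simp
    | succ k ih =>
      intro hk
      rw [← Finset.Ioc_union_Ioc_eq_Ioc (d.Pmono' 0 k (by omega) (by omega))
        (d.Pmono' k (k+1) (by omega) hk),
        Finset.sum_union (by
          simp only [Finset.disjoint_left, Finset.mem_Ioc]
          intro a h1 h2
          omega)]
      rw [ih (by omega), Finset.sum_range_succ, d.edge_sum k (by omega)]
  have := key d.n le_rfl
  rwa [d.hP0] at this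

lemma v_int : (({ij : ℕ × ℕ | unitSq ij.1 ij.2 ⊆ d.G}.ncard : ℤ)) =
    ∑ x ∈ Finset.Ioc (0:ℤ) (d.P d.n), ⌊d.H (x:ℝ)⌋ := by
  rw [d.v_count]
  push_cast
  rw [Finset.sum_congr rfl (fun i _ => Int.natCast_floor_eq_floor (d.H_nonneg _))]
  apply Finset.sum_nbij' (i := fun i : ℕ => (i:ℤ) + 1) (j := fun x : ℤ => (x - 1).toNat)
  · intro a ha
    simp only [Finset.mem_range] at ha
    simp only [Finset.mem_Ioc]
    omega
  · intro x hx
    simp only [Finset.mem_Ioc] at hx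
    simp only [Finset.mem_range]
    omega
  · intro a _
    omega
  · intro x hx
    simp only [Finset.mem_Ioc] at hx
    omega
  · intro a _
    congr 1
    push_cast
    ring

lemma r_int : (({x : ℝ × ℝ | x ∈ interior d.G ∧ ∃ a b : ℤ, x = ((a:ℝ), (b:ℝ))}.ncard : ℤ)) =
    (∑ x ∈ Finset.Ioc (0:ℤ) (d.P d.n), (⌈d.H (x:ℝ)⌉ - 1)) + 1 := by
  rw [d.r_count]
  push_cast
  have hpos : ∀ a ∈ Finset.Ioo (0:ℤ) (d.P d.n), ((⌈d.H ((a:ℤ):ℝ)⌉ - 1).toNat : ℤ) =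
      ⌈d.H ((a:ℤ):ℝ)⌉ - 1 := by
    intro a ha
    simp only [Finset.mem_Ioo] at ha
    have h1 : (0:ℝ) < d.H ((a:ℤ):ℝ) := d.H_pos _ (by exact_mod_cast ha.2)
    have h2 : 0 < ⌈d.H ((a:ℤ):ℝ)⌉ := Int.ceil_pos.mpr h1
    omega
  rw [Finset.sum_congr rfl hpos]
  have hsplit : Finset.Ioc (0:ℤ) (d.P d.n) =
      insert (d.P d.n) (Finset.Ioo (0:ℤ) (d.P d.n)) :=
    (Finset.Ioo_insert_right d.p_pos).symm
  rw [hsplit, Finset.sum_insert Finset.right_notMem_Ioo]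
  have hHp : d.H ((d.P d.n : ℤ):ℝ) = 0 := d.H_zero _ le_rfl
  rw [hHp]
  simp

lemma sum_fl : ∑ x ∈ Finset.Ioc (0:ℤ) (d.P d.n), d.fl x =
    (∑ i ∈ Finset.range d.n, (d.P (i+1) - d.P i) * (d.Q i + d.Q (i+1))) - d.Q 0 := by
  rw [d.total_sum]
  have : ∀ i ∈ Finset.range d.n,
      (d.P (i+1) - d.P i - 1) * (d.Q i + d.Q (i+1)) + 2 * d.Q (i+1) =
      (d.P (i+1) - d.P i) * (d.Q i + d.Q (i+1)) - (d.Q i - d.Q (i+1)) := by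
    intro i _
    ring
  rw [Finset.sum_congr rfl this, Finset.sum_sub_distrib, Finset.sum_range_sub' (fun i => d.Q i)]
  rw [d.hQn]
  ring

lemma counts : (({ij : ℕ × ℕ | unitSq ij.1 ij.2 ⊆ d.G}.ncard : ℤ)) +
    (({x : ℝ × ℝ | x ∈ interior d.G ∧ ∃ a b : ℤ, x = ((a:ℝ), (b:ℝ))}.ncard : ℤ)) =
    (∑ i ∈ Finset.range d.n, (d.P (i+1) - d.P i) * (d.Q i + d.Q (i+1)))
      - d.Q 0 - d.P d.n + 1 := by
  rw [d.v_int, d.r_int]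
  have hcomb : (∑ x ∈ Finset.Ioc (0:ℤ) (d.P d.n), ⌊d.H (x:ℝ)⌋) +
      ((∑ x ∈ Finset.Ioc (0:ℤ) (d.P d.n), (⌈d.H (x:ℝ)⌉ - 1)) + 1) =
      (∑ x ∈ Finset.Ioc (0:ℤ) (d.P d.n), (d.fl x - 1)) + 1 := by
    simp only [fl, Finset.sum_sub_distrib, Finset.sum_add_distrib]
    ring
  rw [hcomb, Finset.sum_sub_distrib, d.sum_fl, Finset.sum_const, Int.card_Ioc, sub_zero,
    nsmul_eq_mul, mul_one, Int.toNat_of_nonneg d.p_pos.le]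
  try ring

end ND
end NewtonPf

/-- For a Newton diagram datum with `gcd(pᵢ,qᵢ) = 1`, with `p = Pₙ` and `q = Q₀`:
`2·vol(Γ₋) - (p + q) + 1 = v + r`, where `v` is the number of unit lattice squares with
nonnegative-integer corner contained in `Γ₋`, and `r` is the number of lattice points in
the topological interior of `Γ₋`. (This is the combinatorial content of Theorem 1.1:
`μ(f) = v(T_F|_{Γ₋(f)}) + r(T_F|_{Γ₋(f)})`.) -/
theorem milnor_eq_vertices_add_regions (n : ℕ) (hn : 1 ≤ n) (P Q : ℕ → ℤ)
    (hP0 : P 0 = 0) (hQn : Q n = 0)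
    (hPmono : ∀ i < n, P i < P (i + 1))
    (hQmono : ∀ i < n, Q (i + 1) < Q i)
    (hconv : ∀ i, 1 ≤ i → i < n →
      ((Q (i - 1) - Q i : ℤ) : ℚ) / ((P i - P (i - 1) : ℤ) : ℚ) >
        ((Q i - Q (i + 1) : ℤ) : ℚ) / ((P (i + 1) - P i : ℤ) : ℚ))
    (hgcd : ∀ i, 1 ≤ i → i ≤ n → Int.gcd (P i - P (i - 1)) (Q (i - 1) - Q i) = 1) :
    2 * (volume (gammaMinus n P Q)).toReal - (((P n : ℤ) : ℝ) + ((Q 0 : ℤ) : ℝ)) + 1 =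
      ({ij : ℕ × ℕ | unitSq ij.1 ij.2 ⊆ gammaMinus n P Q}.ncard : ℝ) +
      ({x : ℝ × ℝ | x ∈ interior (gammaMinus n P Q) ∧
        ∃ a b : ℤ, x = ((a : ℝ), (b : ℝ))}.ncard : ℝ) := by
  set d : NewtonPf.ND := ⟨n, P, Q, hn, hP0, hQn, hPmono, hQmono, hconv⟩ with hd
  have hΓ : gammaMinus n P Q = d.G := d.gamma_eq
  rw [hΓ]
  have hvol : 2 * (volume d.G).toReal =
      ((∑ i ∈ Finset.range n, (P (i+1) - P i) * (Q i + Q (i+1)) : ℤ) : ℝ) := by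
    rw [d.volume_G_toReal]
    rw [Finset.mul_sum]
    push_cast
    apply Finset.sum_congr rfl
    intro i _
    ring
  have hc := d.counts
  have hc' : (({ij : ℕ × ℕ | unitSq ij.1 ij.2 ⊆ d.G}.ncard : ℝ)) +
      (({x : ℝ × ℝ | x ∈ interior d.G ∧ ∃ a b : ℤ, x = ((a:ℝ), (b:ℝ))}.ncard : ℝ)) =
      ((((∑ i ∈ Finset.range n, (P (i+1) - P i) * (Q i + Q (i+1)) : ℤ))
        - Q 0 - P n + 1 : ℤ) : ℝ) := by
    exact_mod_cast congrArg (fun z : ℤ => (z : ℝ)) hc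
  rw [hc']
  rw [show ((P n : ℤ) : ℝ) + ((Q 0 : ℤ) : ℝ) =
    (((P n + Q 0 : ℤ)) : ℝ) from by push_cast; ring]
  push_cast at hvol ⊢
  linarith
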